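/- If S ⊆ C_s(G,X) satisfies the compactness axiom and X is locally compact, then the star-construction S*W is metrizable for every subset W ⊆ G × X. -/

import Mathlib

open Set Filter Topology TopologicalSpace

namespace Yorke

/-- The space `X̂ = X ∪ {ω}`, encoded as `Option X` with `ω = none`.  Its open sets are
`X̂` itself together with the open sets of `X`. -/
instance hatTopology (X : Type*) [TopologicalSpace X] : TopologicalSpace (Option X) :=
  TopologicalSpace.generateFrom
    ({Set.univ} ∪ {s : Set (Option X) | ∃ u : Set X, IsOpen u ∧ s = (Option.some : X → Option X) '' u})

/-- The space `C_p(G,X)` of partial maps from `G` to `X` (continuous maps defined on a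
nonempty open subset of `G`), encoded via the bijection `μ` with the subspace
`{f : C(G,X̂) | f⁻¹(X) ≠ ∅}` of `C(G,X̂)`; it carries the compact-open topology. -/
abbrev Cp (G X : Type*) [TopologicalSpace G] [TopologicalSpace X] : Type _ :=
  {f : C(G, Option X) // {g : G | f g ≠ none}.Nonempty}

variable {G X : Type*} [TopologicalSpace G] [TopologicalSpace X]

/-- The domain of a partial map. -/
def dom (φ : Cp G X) : Set G := {g : G | φ.1 g ≠ none}

/-- A partial map with nonempty connected domain is maximally defined if every partial map
with nonempty connected domain which extends it is equal to it. -/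
def MaximallyDefined (φ : Cp G X) : Prop :=
  IsConnected (dom φ) ∧
    ∀ ψ : Cp G X, IsConnected (dom ψ) → dom φ ⊆ dom ψ →
      (∀ g ∈ dom φ, φ.1 g = ψ.1 g) → φ = ψ

/-- The space `C_s(G,X)` of maximally defined partial maps, with the subspace topology. -/
abbrev Cs (G X : Type*) [TopologicalSpace G] [TopologicalSpace X] : Type _ :=
  {φ : Cp G X // MaximallyDefined φ}

/-- The orbit `O(φ) = {φ(g) : g ∈ dom φ}`. -/
def orbit (φ : Cs G X) : Set X := {x : X | ∃ g : G, φ.1.1 g = some x}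

/-- The star-construction `S*W = {(g,φ) : φ ∈ S, g ∈ dom φ, (g,φ(g)) ∈ W}`. -/
def star (S : Set (Cs G X)) (W : Set (G × X)) : Set (G × Cs G X) :=
  {p : G × Cs G X | p.2 ∈ S ∧ ∃ x : X, p.2.1.1 p.1 = some x ∧ (p.1, x) ∈ W}

/-- `S` satisfies the compactness axiom if `S*W` is compact for every compact `W`. -/
def CompactnessAxiom (S : Set (Cs G X)) : Prop :=
  ∀ W : Set (G × X), IsCompact W → IsCompact (star S W)

/-- `S` satisfies the existence axiom on `W` if `S*{(t,x)}` is nonempty for all `(t,x) ∈ W`. -/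
def ExistenceAxiom (S : Set (Cs G X)) (W : Set (G × X)) : Prop :=
  ∀ p ∈ W, (star S {p}).Nonempty

/-- `S` satisfies the uniqueness axiom on `W` if `S*{(t,x)}` is empty or a singleton. -/
def UniquenessAxiom (S : Set (Cs G X)) (W : Set (G × X)) : Prop :=
  ∀ p ∈ W, (star S {p}).Subsingleton

section GroupPart

variable {G X : Type*} [TopologicalSpace X] [Group G] [TopologicalSpace G] [IsTopologicalGroup G]

/-- The shift `σ(g,φ)`, the partial map `x ↦ φ(xg)` with domain `(dom φ)g⁻¹`. -/
def shift (g : G) (φ : Cp G X) : Cp G X :=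
  ⟨⟨fun x => φ.1 (x * g), φ.1.continuous.comp (continuous_mul_right g)⟩, by
    obtain ⟨g₀, hg₀⟩ := φ.2
    exact ⟨g₀ * g⁻¹, by simpa [inv_mul_cancel_right] using hg₀⟩⟩

/-- `S ⊆ C_s(G,X)` is `σ`-invariant if `σ(g,φ) ∈ S` for all `g ∈ G`, `φ ∈ S`. -/
def SigmaInvariant (S : Set (Cs G X)) : Prop :=
  ∀ (g : G) (φ : Cs G X), φ ∈ S → ∃ ψ : Cs G X, ψ ∈ S ∧ ψ.1 = shift g φ.1

/-- `A ⊆ X` is weakly invariant with respect to `S` if every `x ∈ A` is the value at the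
identity of some `φ ∈ S` with `O(φ) ⊆ A`. -/
def WeaklyInvariant (S : Set (Cs G X)) (A : Set X) : Prop :=
  ∀ x ∈ A, ∃ φ ∈ S, φ.1.1 (1 : G) = some x ∧ orbit φ ⊆ A

/-- `x` is an equilibrium of `S` if some `φ ∈ S` has `φ(e) = x` and `O(φ) = {x}`. -/
def Equilibrium (S : Set (Cs G X)) (x : X) : Prop :=
  ∃ φ ∈ S, φ.1.1 (1 : G) = some x ∧ orbit φ = {x}

/-- The set of motions `{π(·,x) : x ∈ X} ⊆ C_s(G,X)` of a `G`-action `π`. -/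
def actionSet (π : G × X → X) : Set (Cs G X) :=
  {φ : Cs G X | ∃ x : X, ∀ g : G, φ.1.1 g = some (π (g, x))}

end GroupPart

/-- An isomorphism `<H,k,η> : S*W → S'*W'` of star-constructions: the three maps are
homeomorphisms satisfying `ev ∘ H = k ∘ ev` and `p ∘ H = η ∘ p`. -/
structure StarIso {G X G' X' : Type*} [TopologicalSpace G] [TopologicalSpace X]
    [TopologicalSpace G'] [TopologicalSpace X']
    (S : Set (Cs G X)) (W : Set (G × X)) (S' : Set (Cs G' X')) (W' : Set (G' × X')) where
  H : ↥(star S W) ≃ₜ ↥(star S' W')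
  k : ↥W ≃ₜ ↥W'
  η : ↥S ≃ₜ ↥S'
  ev_comm : ∀ (q : ↥(star S W)) (x : X), q.1.2.1.1 q.1.1 = some x →
      ∀ hW : (q.1.1, x) ∈ W, ∀ x' : X', (H q).1.2.1.1 (H q).1.1 = some x' →
      ((k ⟨(q.1.1, x), hW⟩ : ↥W') : G' × X') = ((H q).1.1, x')
  p_comm : ∀ q : ↥(star S W), (H q).1.2 = ((η ⟨q.1.2, q.2.1⟩ : ↥S') : Cs G' X')

/-- A map `k = (τ,h) : W → W'` preserves phase space if `h(g,x)` does not depend on `g`. -/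
def PreservesPhase {G X G' X' : Type*} [TopologicalSpace G] [TopologicalSpace X]
    [TopologicalSpace G'] [TopologicalSpace X'] {W : Set (G × X)} {W' : Set (G' × X')}
    (k : ↥W → ↥W') : Prop :=
  ∀ w w' : ↥W, (w : G × X).2 = (w' : G × X).2 →
    ((k w : ↥W') : G' × X').2 = ((k w' : ↥W') : G' × X').2

/-- Two continuous maps are isotopic if they are connected by a continuous family of
homeomorphisms parametrized by `[0,1]`. -/
def Isotopic {A B : Type*} [TopologicalSpace A] [TopologicalSpace B] (f₀ f₁ : A → B) : Prop :=
  ∃ F : unitInterval × A → B, Continuous F ∧ (∀ a, F (0, a) = f₀ a) ∧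
    (∀ a, F (1, a) = f₁ a) ∧ ∀ s : unitInterval, IsHomeomorph fun a => F (s, a)

end Yorke

namespace Yorke

variable {G X : Type*} [Group G] [TopologicalSpace G] [IsTopologicalGroup G]
  [LocallyCompactSpace G] [SecondCountableTopology G] [T2Space G]
  [MetricSpace X] [SecondCountableTopology X]

section Aux

variable {G' X' : Type*} [TopologicalSpace G'] [TopologicalSpace X']

lemma isOpen_some_image {u : Set X'} (hu : IsOpen u) :
    IsOpen ((Option.some : X' → Option X') '' u) :=
  TopologicalSpace.GenerateOpen.basic _ (Or.inr ⟨u, hu, rfl⟩)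

lemma isOpenMap_some : IsOpenMap (Option.some : X' → Option X') :=
  fun _ hu => isOpen_some_image hu

/-- `Option X'` with the hat topology is second countable whenever `X'` is. -/
lemma secondCountable_option [SecondCountableTopology X'] :
    SecondCountableTopology (Option X') := by
  obtain ⟨b, hbc, -, hb⟩ := TopologicalSpace.exists_countable_basis X'
  refine ⟨⟨insert Set.univ ((Set.image (Option.some : X' → Option X')) '' b),
    (hbc.image _).insert _, ?_⟩⟩
  apply le_antisymm
  · refine TopologicalSpace.le_generateFrom_iff_subset_isOpen.2 ?_
    rintro s (rfl | ⟨u, hub, rfl⟩)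
    · exact (isOpen_univ : IsOpen (Set.univ : Set (Option X')))
    · exact isOpen_some_image (hb.isOpen hub)
  · refine TopologicalSpace.le_generateFrom_iff_subset_isOpen.2 ?_
    rintro s (rfl | ⟨u, hu, rfl⟩)
    · exact TopologicalSpace.GenerateOpen.univ
    · rw [hb.open_eq_sUnion' hu, Set.image_sUnion]
      refine TopologicalSpace.GenerateOpen.sUnion _ ?_
      rintro t ⟨v, ⟨hvb, -⟩, rfl⟩
      exact TopologicalSpace.GenerateOpen.basic _
        (Set.mem_insert_of_mem _ ⟨v, hvb, rfl⟩)

variable [T2Space G'] [T2Space X']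

/-- The star-construction is always Hausdorff (by maximality of the partial maps). -/
lemma t2Space_star (S : Set (Cs G' X')) (W : Set (G' × X')) : T2Space ↥(star S W) := by
  classical
  refine ⟨fun p q hpq => ?_⟩
  by_cases hg : p.1.1 = q.1.1
  · set φ : Cs G' X' := p.1.2 with hφdef
    set ψ : Cs G' X' := q.1.2 with hψdef
    have hφψ : φ ≠ ψ := fun h => hpq (Subtype.ext (Prod.ext hg h))
    by_cases hsep : ∃ t x y, φ.1.1 t = some x ∧ ψ.1.1 t = some y ∧ x ≠ y
    · obtain ⟨t, x, y, hx, hy, hxy⟩ := hsep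
      obtain ⟨u, v, hu, hv, hxu, hyv, huv⟩ := t2_separation hxy
      have hC : Continuous fun r : ↥(star S W) => (r.1.2.1.1 : C(G', Option X')) :=
        continuous_subtype_val.comp (continuous_subtype_val.comp
          (continuous_snd.comp continuous_subtype_val))
      have hcont : Continuous fun r : ↥(star S W) => (r.1.2.1.1 : C(G', Option X')) t :=
        (continuous_eval_const t).comp hC
      refine ⟨_, _, (isOpen_some_image hu).preimage hcont,
        (isOpen_some_image hv).preimage hcont, ⟨x, hxu, hx.symm⟩, ⟨y, hyv, hy.symm⟩, ?_⟩
      rw [Set.disjoint_left]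
      rintro r ⟨a, hau, ha⟩ ⟨b, hbv, hb⟩
      rw [← hb] at ha
      obtain rfl : a = b := Option.some_injective _ ha
      exact Set.disjoint_left.1 huv hau hbv
    · push_neg at hsep
      exfalso
      apply hφψ
      have hagree : ∀ t, φ.1.1 t ≠ none → ψ.1.1 t ≠ none → φ.1.1 t = ψ.1.1 t := by
        intro t h1 h2
        obtain ⟨a, ha⟩ := Option.ne_none_iff_exists'.1 h1
        obtain ⟨b, hb⟩ := Option.ne_none_iff_exists'.1 h2
        rw [ha, hb, hsep t a b ha hb]
      set f : C(G', Option X') := φ.1.1 with hfdef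
      set f' : C(G', Option X') := ψ.1.1 with hf'def
      have hnone : ∀ (u : Set X') (o : Option X'), o ∈ Option.some '' u → o ≠ none := by
        rintro u o ⟨a, -, rfl⟩
        simp
      have hcontθ : Continuous fun t => if f t = none then f' t else f t := by
        refine continuous_generateFrom_iff.2 ?_
        rintro s (rfl | ⟨u, hu, rfl⟩)
        · exact isOpen_univ
        · have heq : (fun t => if f t = none then f' t else f t) ⁻¹' (Option.some '' u)
              = f ⁻¹' (Option.some '' u) ∪ f' ⁻¹' (Option.some '' u) := by
            ext t
            by_cases hft : f t = none
            · simp only [Set.mem_preimage, Set.mem_union, if_pos hft, hft]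
              constructor
              · exact fun h => Or.inr h
              · rintro (h | h)
                · exact absurd rfl (hnone u none h)
                · exact h
            · simp only [Set.mem_preimage, Set.mem_union, if_neg hft]
              constructor
              · exact fun h => Or.inl h
              · rintro (h | h)
                · exact h
                · rw [hagree t hft (hnone u _ h)]
                  exact h
          rw [heq]
          exact ((isOpen_some_image hu).preimage f.continuous).union
            ((isOpen_some_image hu).preimage f'.continuous)
      obtain ⟨hpS, xp, hxp, -⟩ := p.2
      obtain ⟨hqS, xq, hxq, -⟩ := q.2
      have hxp' : f p.1.1 ≠ none := by rw [hxp]; simp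
      have hxq' : f' p.1.1 ≠ none := by rw [hg, hxq]; simp
      set Θ : Cp G' X' := ⟨⟨fun t => if f t = none then f' t else f t, hcontθ⟩,
        ⟨p.1.1, by simp only [ContinuousMap.coe_mk, Set.mem_setOf_eq, if_neg hxp']; exact hxp'⟩⟩
        with hΘdef
      have hΘapp : ∀ t, Θ.1 t = if f t = none then f' t else f t := fun t => rfl
      have hdom : dom Θ = dom φ.1 ∪ dom ψ.1 := by
        ext t
        simp only [dom, Set.mem_setOf_eq, Set.mem_union, hΘapp, ← hfdef, ← hf'def]
        by_cases hft : f t = none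
        · simp [hft]
        · simp [hft]
      have hconn : IsConnected (dom Θ) := by
        rw [hdom]
        exact IsConnected.union ⟨p.1.1, hxp', hxq'⟩ φ.2.1 ψ.2.1
      have h1 : φ.1 = Θ := by
        refine φ.2.2 Θ hconn ?_ ?_
        · rw [hdom]; exact Set.subset_union_left
        · intro g hgd
          rw [hΘapp, if_neg hgd]
      have h2 : ψ.1 = Θ := by
        refine ψ.2.2 Θ hconn ?_ ?_
        · rw [hdom]; exact Set.subset_union_right
        · intro g hgd
          by_cases hft : f g = none
          · rw [hΘapp, if_pos hft]
          · rw [hΘapp, if_neg hft]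
            exact (hagree g hft hgd).symm
      exact Subtype.ext (h1.trans h2.symm)
  · obtain ⟨u, v, hu, hv, hpu, hqv, huv⟩ :=
      separated_by_continuous (f := fun r : ↥(star S W) => r.1.1)
        (continuous_fst.comp continuous_subtype_val) hg
    exact ⟨u, v, hu, hv, hpu, hqv, huv⟩

end Aux

section Aux2

variable {G' X' : Type*} [TopologicalSpace G'] [TopologicalSpace X']
  [LocallyCompactSpace G'] [LocallyCompactSpace X']

lemma star_subset_univ (S : Set (Cs G' X')) (W : Set (G' × X')) :
    star S W ⊆ star S (Set.univ : Set (G' × X')) := by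
  rintro ⟨g, φ⟩ ⟨hφS, y, hy, -⟩
  exact ⟨hφS, y, hy, trivial⟩

lemma wlc_star (S : Set (Cs G' X')) (hS : CompactnessAxiom S) :
    WeaklyLocallyCompactSpace ↥(star S (Set.univ : Set (G' × X'))) := by
  constructor
  intro p
  obtain ⟨hpS, x, hx, -⟩ := p.2
  obtain ⟨N, hNc, hNn⟩ := exists_compact_mem_nhds ((p.1.1, x) : G' × X')
  refine ⟨Subtype.val ⁻¹' star S N, ?_, ?_⟩
  · rw [Topology.IsEmbedding.subtypeVal.isCompact_iff, Subtype.image_preimage_coe,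
      Set.inter_eq_right.2 (star_subset_univ S N)]
    exact hS N hNc
  · have hC : Continuous fun q : ↥(star S (Set.univ : Set (G' × X'))) =>
        ((q.1.2.1.1 : C(G', Option X')), q.1.1) :=
      (continuous_subtype_val.comp (continuous_subtype_val.comp
        (continuous_snd.comp continuous_subtype_val))).prodMk
        (continuous_fst.comp continuous_subtype_val)
    have hev : Continuous fun q : ↥(star S (Set.univ : Set (G' × X'))) =>
        (q.1.2.1.1 : C(G', Option X')) q.1.1 :=
      continuous_eval.comp hC
    have hF : Continuous fun q : ↥(star S (Set.univ : Set (G' × X'))) =>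
        ((q.1.1, (q.1.2.1.1 : C(G', Option X')) q.1.1) : G' × Option X') :=
      (continuous_fst.comp continuous_subtype_val).prodMk hev
    rw [mem_nhds_iff]
    refine ⟨(fun q : ↥(star S (Set.univ : Set (G' × X'))) =>
        ((q.1.1, (q.1.2.1.1 : C(G', Option X')) q.1.1) : G' × Option X')) ⁻¹'
        (Prod.map id Option.some '' interior N), ?_, ?_, ?_⟩
    · rintro q ⟨⟨g', y⟩, hy, heq⟩
      obtain ⟨h1, h2⟩ := Prod.ext_iff.1 heq
      simp only [Prod.map_fst, Prod.map_snd, id_eq] at h1 h2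
      refine Set.mem_preimage.2 ⟨q.2.1, y, h2.symm, ?_⟩
      rw [← h1]
      exact interior_subset hy
    · exact (((IsOpenMap.id).prodMap isOpenMap_some) _ isOpen_interior).preimage hF
    · refine Set.mem_preimage.2 ⟨(p.1.1, x), mem_interior_iff_mem_nhds.2 hNn, ?_⟩
      simp only [Prod.map, id_eq, hx]

end Aux2

set_option synthInstance.maxHeartbeats 1000000 in
set_option maxHeartbeats 1000000 in
/-- If `S` satisfies the compactness axiom and `X` is locally compact, `S*W` is
metrizable for every `W`. -/
theorem statement_7 [LocallyCompactSpace X] (S : Set (Cs G X)) (hS : CompactnessAxiom S)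
    (W : Set (G × X)) : MetrizableSpace ↥(star S W) := by
  haveI : SecondCountableTopology (Option X) := secondCountable_option
  haveI : SecondCountableTopology C(G, Option X) := inferInstance
  haveI : SecondCountableTopology (Cp G X) :=
    TopologicalSpace.Subtype.secondCountableTopology _
  haveI : SecondCountableTopology (Cs G X) :=
    TopologicalSpace.Subtype.secondCountableTopology _
  haveI h2nd : SecondCountableTopology ↥(star S (Set.univ : Set (G × X))) := inferInstance
  haveI ht2 : T2Space ↥(star S (Set.univ : Set (G × X))) := t2Space_star S _
  haveI : WeaklyLocallyCompactSpace ↥(star S (Set.univ : Set (G × X))) := wlc_star S hS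
  haveI : RegularSpace ↥(star S (Set.univ : Set (G × X))) := inferInstance
  haveI : T3Space ↥(star S (Set.univ : Set (G × X))) := ⟨⟩
  haveI : MetrizableSpace ↥(star S (Set.univ : Set (G × X))) :=
    TopologicalSpace.metrizableSpace_of_t3_secondCountable _
  exact (Topology.IsEmbedding.inclusion (star_subset_univ S W)).metrizableSpace

end Yorke
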